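/- Let f^W be a voting by committees and S ∈ 2^K a set such that (i) for each k ∈ S, agent i is not in the intersection of all coalitions in W_k, and (ii) for each k ∉ S, {i} ∉ W_k. Then S ∈ O^W(P_i) for every preference P_i. -/
import Mathlib


/-- A preference profile: each agent `i : Fin n` has a strict preference,
modeled as a linear order on the set of alternatives `X`. -/
abbrev Profile (n : ℕ) (X : Type*) := Fin n → LinearOrder X

/-- The top (best) alternative of a preference `L`. -/
noncomputable def top {X : Type*} [Fintype X] [Nonempty X] (L : LinearOrder X) : X :=
  @Finset.max' X L Finset.univ Finset.univ_nonempty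

/-- `x` is strictly preferred to `y` according to `L`. -/
def prefers {X : Type*} (L : LinearOrder X) (x y : X) : Prop := L.lt y x

/-- The option set left open by preference `L` of agent `i` at rule `f`. -/
def OptionSet {n : ℕ} {X : Type*} (f : Profile n X → X) (i : Fin n) (L : LinearOrder X) :
    Set X :=
  {x | ∃ P : Profile n X, P i = L ∧ f P = x}

/-- `Li'` is a profitable manipulation of `f` at (true preference) `Li` for agent `i`. -/
def IsManip {n : ℕ} {X : Type*} (f : Profile n X → X) (i : Fin n)
    (Li Li' : LinearOrder X) : Prop :=
  ∃ P : Profile n X, P i = Li ∧ prefers Li (f (Function.update P i Li')) (f P)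

/-- The worst element of `O(Li')` is strictly `Li`-preferred to the worst element of `O(Li)`.
For nonempty finite option sets this is equivalent to: some element of `O(Li)` is strictly
worse (w.r.t. `Li`) than every element of `O(Li')`. -/
def WorstImproves {n : ℕ} {X : Type*} (f : Profile n X → X) (i : Fin n)
    (Li Li' : LinearOrder X) : Prop :=
  ∃ w ∈ OptionSet f i Li, ∀ w' ∈ OptionSet f i Li', prefers Li w' w

/-- The best element of `O(Li')` is strictly `Li`-preferred to the best element of `O(Li)`.
For nonempty finite option sets this is equivalent to: some element of `O(Li')` is strictly
better (w.r.t. `Li`) than every element of `O(Li)`. -/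
def BestImproves {n : ℕ} {X : Type*} (f : Profile n X → X) (i : Fin n)
    (Li Li' : LinearOrder X) : Prop :=
  ∃ b' ∈ OptionSet f i Li', ∀ b ∈ OptionSet f i Li, prefers Li b' b

/-- `Li'` is an obvious manipulation of `f` at `Li` for agent `i`. -/
def IsObviousManip {n : ℕ} {X : Type*} (f : Profile n X → X) (i : Fin n)
    (Li Li' : LinearOrder X) : Prop :=
  IsManip f i Li Li' ∧ (WorstImproves f i Li Li' ∨ BestImproves f i Li Li')

/-- `f` is not obviously manipulable. -/
def NOM {n : ℕ} {X : Type*} (f : Profile n X → X) : Prop :=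
  ∀ (i : Fin n) (Li Li' : LinearOrder X), ¬ IsObviousManip f i Li Li'

/-- `f` is tops-only. -/
def TopsOnly {n : ℕ} {X : Type*} [Fintype X] [Nonempty X] (f : Profile n X → X) : Prop :=
  ∀ P P' : Profile n X, (∀ i, top (P i) = top (P' i)) → f P = f P'

/-- The set `V_i` of alternatives that agent `i` vetoes via some preference. -/
def VetoSet {n : ℕ} {X : Type*} (f : Profile n X → X) (i : Fin n) : Set X :=
  {x | ∃ L : LinearOrder X, x ∉ OptionSet f i L}

/-- The set `SV_i` of alternatives strongly vetoed by agent `i`: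
`x` is vetoed via `L` precisely when the top of `L` differs from `x`. -/
def StrongVetoSet {n : ℕ} {X : Type*} [Fintype X] [Nonempty X]
    (f : Profile n X → X) (i : Fin n) : Set X :=
  {x | ∀ L : LinearOrder X, x ∉ OptionSet f i L ↔ top L ≠ x}

/-- `f` is dictatorial: some agent's top alternative is always selected. -/
def Dictatorial {n : ℕ} {X : Type*} [Fintype X] [Nonempty X]
    (f : Profile n X → X) : Prop :=
  ∃ i : Fin n, ∀ P : Profile n X, f P = top (P i)

open scoped Classical

noncomputable def topOrder {X : Type*} (L : LinearOrder X) (T : X) : LinearOrder X :=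
  letI := L
  LinearOrder.lift' (fun x => toLex ((decide (x = T)), x) : X → Bool ×ₗ X)
    (fun a b h => by simpa using congrArg (fun p => (ofLex p).2) h)

lemma le_topOrder {X : Type*} (L : LinearOrder X) (T x : X) : (topOrder L T).le x T := by
  letI := L
  show toLex ((decide (x = T) : Bool), x) ≤ toLex ((decide (T = T) : Bool), T)
  rcases eq_or_ne x T with rfl | hx
  · exact le_refl _
  · rw [Prod.Lex.le_iff]
    left
    simp [hx]

lemma top_topOrder {X : Type*} [Fintype X] [Nonempty X] (L : LinearOrder X) (T : X) :
    top (topOrder L T) = T := by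
  letI I := topOrder L T
  exact le_antisymm (Finset.max'_le _ _ _ fun x _ => le_topOrder L T x)
    (Finset.le_max' _ _ (Finset.mem_univ T))


/-- `Wk` is a committee: a nonempty, monotone family of nonempty coalitions of agents. -/
def Committee {n : ℕ} (Wk : Set (Finset (Fin n))) : Prop :=
  Wk.Nonempty ∧ (∀ M ∈ Wk, M.Nonempty) ∧
    ∀ M ∈ Wk, ∀ M' : Finset (Fin n), M ⊆ M' → M' ∈ Wk

/-- Voting by committees: object `k` is chosen iff the set of agents whose top contains
`k` is a winning coalition in `W k`. Alternatives are subsets of the set `K` of objects. -/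
noncomputable def vbc {n : ℕ} {K : Type*} [Fintype K] [DecidableEq K]
    (W : K → Set (Finset (Fin n))) (P : Profile n (Finset K)) : Finset K :=
  Finset.univ.filter fun k =>
    (Finset.univ.filter fun i : Fin n => k ∈ top (P i)) ∈ W k

/-- If (i) for each `k ∈ S` agent `i` is not in the intersection of all coalitions of
`W k`, and (ii) for each `k ∉ S`, `{i} ∉ W k`, then `S` belongs to the option set of
every preference of agent `i`. -/
theorem vbc_mem_optionSet {n : ℕ} {K : Type*} [Fintype K] [DecidableEq K]
    (hn : 2 ≤ n) (hK : 2 ≤ Fintype.card K)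
    (W : K → Set (Finset (Fin n))) (hW : ∀ k, Committee (W k))
    (i : Fin n) (S : Finset K)
    (h1 : ∀ k ∈ S, ∃ M ∈ W k, i ∉ M)
    (h2 : ∀ k ∉ S, ({i} : Finset (Fin n)) ∉ W k) :
    ∀ L : LinearOrder (Finset K), S ∈ OptionSet (vbc W) i L := by
  intro L
  set M : K → Finset (Fin n) := fun k => if h : k ∈ S then (h1 k h).choose else ∅ with hM
  have hMmem : ∀ k ∈ S, M k ∈ W k := by
    intro k hk; simp only [hM, dif_pos hk]; exact (h1 k hk).choose_spec.1
  have hMi : ∀ k ∈ S, i ∉ M k := by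
    intro k hk; simp only [hM, dif_pos hk]; exact (h1 k hk).choose_spec.2
  set T : Fin n → Finset K := fun j => S.filter (fun k => j ∈ M k) with hT
  set P : Profile n (Finset K) := fun j => if j = i then L else topOrder L (T j) with hP
  refine ⟨P, by simp [hP], ?_⟩
  have htop : ∀ j, j ≠ i → top (P j) = T j := by
    intro j hj; simp [hP, hj, top_topOrder]
  ext k
  simp only [vbc, Finset.mem_filter, Finset.mem_univ, true_and]
  constructor
  · intro hw
    by_contra hk
    have hsub : (Finset.univ.filter fun j : Fin n => k ∈ top (P j)) ⊆ {i} := by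
      intro j hj
      simp only [Finset.mem_filter, Finset.mem_univ, true_and] at hj
      by_contra hji
      simp only [Finset.mem_singleton] at hji
      rw [htop j hji] at hj
      simp only [hT, Finset.mem_filter] at hj
      exact hk hj.1
    rcases Finset.subset_singleton_iff.mp hsub with h | h
    · have := (hW k).2.1 _ hw
      rw [h] at this
      exact this.ne_empty rfl
    · rw [h] at hw
      exact h2 k hk hw
  · intro hk
    refine (hW k).2.2 (M k) (hMmem k hk) _ ?_
    intro j hj
    have hji : j ≠ i := fun h => hMi k hk (h ▸ hj)
    simp only [Finset.mem_filter, Finset.mem_univ, true_and]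
    rw [htop j hji]
    simp only [hT, Finset.mem_filter]
    exact ⟨hk, hj⟩
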